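/- The constrained quantization dimension D(P) = lim_{n→∞} 2 log n / (−log(Vₙ − V_∞)) exists and equals 1, for the uniform distribution on [0,2] with constraint the two slanted sides of the equilateral triangle O(0,0), A(2,0), B(1,√3). -/

import Mathlib

open scoped Classical

/-- Distortion error of a finite set w.r.t. the uniform distribution on the base `[0,2]`,
using the squared Euclidean distance `rho((x,0),(a,b)) = (x-a)^2 + b^2`. -/
noncomputable def distortion (α : Finset (ℝ × ℝ)) : ℝ :=
  (1/2) * ∫ x in (0:ℝ)..2, sInf ((fun p : ℝ × ℝ => (x - p.1)^2 + p.2^2) '' (α : Set (ℝ × ℝ)))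

/-- The side `OB` of the equilateral triangle `O(0,0)`, `A(2,0)`, `B(1,√3)`. -/
def S1 : Set (ℝ × ℝ) := {p | ∃ x : ℝ, 0 ≤ x ∧ x ≤ 1 ∧ p = (x, Real.sqrt 3 * x)}

/-- The side `AB` of the equilateral triangle. -/
def S2 : Set (ℝ × ℝ) := {p | ∃ x : ℝ, 1 ≤ x ∧ x ≤ 2 ∧ p = (x, -(Real.sqrt 3) * (x - 2))}

/-- The `n`-th constrained quantization error with constraint `S1 ∪ S2`. -/
noncomputable def V (n : ℕ) : ℝ :=
  sInf {v | ∃ α : Finset (ℝ × ℝ), ↑α ⊆ S1 ∪ S2 ∧ 1 ≤ α.card ∧ α.card ≤ n ∧ v = distortion α}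

open MeasureTheory intervalIntegral Set

noncomputable def base (x : ℝ) : ℝ := (3/4) * (min x (2 - x))^2

lemma base_continuous : Continuous base := by
  unfold base; fun_prop

lemma base_integral : ∫ x in (0:ℝ)..2, base x = 1/2 := by
  have h1 : ∫ x in (0:ℝ)..1, base x = 1/4 := by
    have : ∀ x ∈ Set.uIcc (0:ℝ) 1, base x = (3/4) * x^2 := by
      intro x hx
      rw [Set.uIcc_of_le (by norm_num)] at hx
      unfold base
      rw [min_eq_left (by linarith [hx.1, hx.2])]
    rw [intervalIntegral.integral_congr this]
    simp [intervalIntegral.integral_const_mul, integral_pow]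
    norm_num
  have h2 : ∫ x in (1:ℝ)..2, base x = 1/4 := by
    have : ∀ x ∈ Set.uIcc (1:ℝ) 2, base x = (3/4) * (2-x)^2 := by
      intro x hx
      rw [Set.uIcc_of_le (by norm_num)] at hx
      unfold base
      rw [min_eq_right (by linarith [hx.1, hx.2])]
    rw [intervalIntegral.integral_congr this]
    have h3 := intervalIntegral.integral_comp_sub_left (a := (1:ℝ)) (b := 2) (fun x => (3/4) * x^2) 2
    norm_num at h3
    rw [intervalIntegral.integral_const_mul]
    exact h3
  rw [← intervalIntegral.integral_add_adjacent_intervals (a := (0:ℝ)) (b := 1) (c := 2)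
    (base_continuous.intervalIntegrable _ _) (base_continuous.intervalIntegrable _ _), h1, h2]
  norm_num

noncomputable def err (α : Finset (ℝ × ℝ)) (x : ℝ) : ℝ :=
  sInf ((fun p : ℝ × ℝ => (x - p.1)^2 + p.2^2) '' (α : Set (ℝ × ℝ)))

lemma err_eq_inf' (α : Finset (ℝ × ℝ)) (h : α.Nonempty) (x : ℝ) :
    err α x = α.inf' h (fun p => (x - p.1)^2 + p.2^2) := by
  rw [Finset.inf'_eq_csInf_image]; rfl

lemma err_continuous (α : Finset (ℝ × ℝ)) (h : α.Nonempty) : Continuous (err α) := by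
  have : err α = fun x => α.inf' h (fun p => (x - p.1)^2 + p.2^2) := by
    funext x; exact err_eq_inf' α h x
  rw [this]
  exact Continuous.finset_inf'_apply h (fun p _ => by fun_prop)

lemma sq3 : Real.sqrt 3 ^ 2 = 3 := Real.sq_sqrt (by norm_num)

lemma val_S1 {p : ℝ × ℝ} (hp : p ∈ S1) (x : ℝ) :
    (x - p.1)^2 + p.2^2 = (3/4) * x^2 + (x - 4*p.1)^2/4 ∧ 0 ≤ p.1 ∧ p.1 ≤ 1 := by
  obtain ⟨a, ha0, ha1, rfl⟩ := hp
  refine ⟨?_, ha0, ha1⟩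
  simp only []
  have : (Real.sqrt 3 * a)^2 = 3 * a^2 := by rw [mul_pow, sq3]
  rw [this]; ring

lemma val_S2 {p : ℝ × ℝ} (hp : p ∈ S2) (x : ℝ) :
    (x - p.1)^2 + p.2^2 = (3/4) * (2-x)^2 + ((2-x) - 4*(2-p.1))^2/4 ∧ 1 ≤ p.1 ∧ p.1 ≤ 2 := by
  obtain ⟨a, ha0, ha1, rfl⟩ := hp
  refine ⟨?_, ha0, ha1⟩
  simp only []
  have : (-Real.sqrt 3 * (a-2))^2 = 3 * (a-2)^2 := by
    rw [mul_pow, neg_pow, sq3]; ring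
  rw [this]; ring

lemma pt_lb {p : ℝ × ℝ} (hp : p ∈ S1 ∪ S2) {x : ℝ} (hx : x ∈ Set.Icc (0:ℝ) 2) :
    base x ≤ (x - p.1)^2 + p.2^2 := by
  have hm0 : 0 ≤ min x (2-x) := le_min hx.1 (by linarith [hx.2])
  rcases hp with hp | hp
  · have h := (val_S1 hp x).1
    have : (min x (2-x))^2 ≤ x^2 := pow_le_pow_left₀ hm0 (min_le_left _ _) 2
    unfold base; nlinarith [sq_nonneg (x - 4*p.1)]
  · have h := (val_S2 hp x).1
    have : (min x (2-x))^2 ≤ (2-x)^2 := pow_le_pow_left₀ hm0 (min_le_right _ _) 2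
    unfold base; nlinarith [sq_nonneg ((2-x) - 4*(2-p.1))]


lemma distortion_eq (α : Finset (ℝ × ℝ)) :
    distortion α = (1/2) * ∫ x in (0:ℝ)..2, err α x := rfl


set_option maxHeartbeats 1000000 in
lemma lower_bound {n : ℕ} (hn : 1 ≤ n) {α : Finset (ℝ × ℝ)}
    (hsub : ↑α ⊆ S1 ∪ S2) (hcard : α.card ≤ n) (hne : α.Nonempty) :
    1/4 + 1/(32768 * (n:ℝ)^2) ≤ distortion α := by
  set r : ℝ := 1/(64*n) with hr
  have hn' : (1:ℝ) ≤ n := by exact_mod_cast hn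
  have hn0 : (n:ℝ) ≠ 0 := by positivity
  have hrpos : 0 < r := by positivity
  set δ : ℝ := r^2 with hδ
  have hδpos : 0 < δ := by positivity
  have hrsmall : r ≤ 1/64 := by
    rw [hr]
    rw [div_le_div_iff₀ (by positivity) (by norm_num)]
    nlinarith
  have hδsmall : δ ≤ 1/4096 := by
    rw [hδ]
    nlinarith
  set good : Set ℝ := Set.Ioc (0:ℝ) (1/2) \ ⋃ p ∈ α, Metric.ball (4*p.1) (2*r) with hgood
  have hmeas : MeasurableSet good := by
    apply MeasurableSet.diff measurableSet_Ioc
    exact MeasurableSet.biUnion α.countable_toSet (fun p _ => measurableSet_ball)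
  have hIoc : volume (Set.Ioc (0:ℝ) (1/2)) = ENNReal.ofReal (1/2) := by
    rw [Real.volume_Ioc]; norm_num
  have hvol : (7:ℝ)/16 ≤ (volume good).toReal := by
    have hU : volume (⋃ p ∈ α, Metric.ball (4*(p:ℝ×ℝ).1) (2*r)) ≤ ENNReal.ofReal (1/16) := by
      calc volume (⋃ p ∈ α, Metric.ball (4*(p:ℝ×ℝ).1) (2*r))
          ≤ ∑ p ∈ α, volume (Metric.ball (4*p.1) (2*r)) := measure_biUnion_finset_le _ _
        _ = ∑ p ∈ α, ENNReal.ofReal (4*r) := by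
            refine Finset.sum_congr rfl fun p _ => ?_
            rw [Real.volume_ball]
            ring_nf
        _ = (α.card : ENNReal) * ENNReal.ofReal (4*r) := by
            rw [Finset.sum_const, nsmul_eq_mul]
        _ ≤ (n : ENNReal) * ENNReal.ofReal (4*r) := by
            have : (α.card : ENNReal) ≤ (n : ENNReal) := by exact_mod_cast hcard
            exact mul_le_mul_left this _
        _ = ENNReal.ofReal (n * (4*r)) := by
            rw [ENNReal.ofReal_mul (n.cast_nonneg)]
            congr 1
            exact (ENNReal.ofReal_natCast n).symm
        _ ≤ ENNReal.ofReal (1/16) := by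
            apply ENNReal.ofReal_le_ofReal
            rw [hr]
            have : (n:ℝ) * (4 * (1/(64*(n:ℝ)))) = 1/16 := by field_simp; ring
            linarith [this.le]
        _ ≤ _ := le_refl _
    have hsplit : volume (Set.Ioc (0:ℝ) (1/2)) ≤ volume good + ENNReal.ofReal (1/16) := by
      calc volume (Set.Ioc (0:ℝ) (1/2))
          ≤ volume (good ∪ ⋃ p ∈ α, Metric.ball (4*(p:ℝ×ℝ).1) (2*r)) := by
            apply measure_mono
            intro x hx
            by_cases h : x ∈ ⋃ p ∈ α, Metric.ball (4*(p:ℝ×ℝ).1) (2*r)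
            · exact Or.inr h
            · exact Or.inl ⟨hx, h⟩
        _ ≤ volume good + volume (⋃ p ∈ α, Metric.ball (4*(p:ℝ×ℝ).1) (2*r)) := measure_union_le _ _
        _ ≤ volume good + ENNReal.ofReal (1/16) := by gcongr
    have h716 : ENNReal.ofReal (7/16) ≤ volume good := by
      have : ENNReal.ofReal (7/16) = ENNReal.ofReal (1/2) - ENNReal.ofReal (1/16) := by
        rw [← ENNReal.ofReal_sub _ (by norm_num)]
        norm_num
      rw [this]
      rw [tsub_le_iff_right]
      rw [← hIoc]
      exact hsplit
    have hfin : volume good ≠ ⊤ := by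
      apply ne_top_of_le_ne_top _ (measure_mono (Set.diff_subset))
      rw [hIoc]; exact ENNReal.ofReal_ne_top
    calc (7:ℝ)/16 = (ENNReal.ofReal (7/16)).toReal := by rw [ENNReal.toReal_ofReal]; norm_num
      _ ≤ (volume good).toReal := ENNReal.toReal_mono hfin h716
  have hpt : ∀ x ∈ Set.Icc (0:ℝ) 2,
      base x + δ * good.indicator (fun _ => (1:ℝ)) x ≤ err α x := by
    intro x hx
    by_cases hxg : x ∈ good
    · rw [Set.indicator_of_mem hxg, mul_one]
      rw [err_eq_inf' α hne]
      apply Finset.le_inf'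
      intro p hp
      have hxI : x ∈ Set.Ioc (0:ℝ) (1/2) := hxg.1
      have hdist : 2*r ≤ |x - 4*p.1| := by
        have hnb : x ∉ Metric.ball (4*p.1) (2*r) := fun hmem => hxg.2 (Set.mem_biUnion hp hmem)
        rw [Metric.mem_ball, Real.dist_eq, not_lt] at hnb
        exact hnb
      have hsq : 4*δ ≤ (x - 4*p.1)^2 := by
        have h1 : (2*r)^2 ≤ |x - 4*p.1|^2 := by
          apply pow_le_pow_left₀ (by positivity) hdist
        rw [sq_abs] at h1
        nlinarith
      rcases hsub hp with hp1 | hp2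
      · have h := (val_S1 hp1 x).1
        have hm0 : 0 ≤ min x (2-x) := le_min (le_of_lt hxI.1) (by linarith [hxI.2])
        have hb : base x ≤ (3/4)*x^2 := by
          unfold base
          nlinarith [pow_le_pow_left₀ hm0 (min_le_left x (2-x)) 2]
        linarith
      · have h := (val_S2 hp2 x).1
        have hm0 : 0 ≤ min x (2-x) := le_min (le_of_lt hxI.1) (by linarith [hxI.2])
        have hb : base x ≤ 3/16 := by
          unfold base
          have h1 : min x (2-x) ≤ 1/2 := le_trans (min_le_left _ _) hxI.2
          nlinarith
        have h32 : (3:ℝ)/2 ≤ 2 - x := by linarith [hxI.2]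
        nlinarith [sq_nonneg ((2-x) - 4*(2-p.1))]
    · rw [Set.indicator_of_notMem hxg, mul_zero, add_zero]
      rw [err_eq_inf' α hne]
      apply Finset.le_inf'
      intro p hp
      exact pt_lb (hsub hp) hx
  -- integrability
  have hig : MeasureTheory.Integrable (good.indicator (fun _ => (1:ℝ))) volume := by
    rw [MeasureTheory.integrable_indicator_iff hmeas]
    refine MeasureTheory.integrableOn_const ?_
    exact ne_of_lt (lt_of_le_of_lt (measure_mono Set.diff_subset) (by rw [hIoc]; exact ENNReal.ofReal_lt_top))
  have hind : IntervalIntegrable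
      (fun x => base x + δ * good.indicator (fun _ => (1:ℝ)) x) volume 0 2 := by
    apply IntervalIntegrable.add (base_continuous.intervalIntegrable _ _)
    exact (hig.const_mul δ).intervalIntegrable
  have hint_err : IntervalIntegrable (err α) volume 0 2 :=
    (err_continuous α hne).intervalIntegrable _ _
  have hmono := intervalIntegral.integral_mono_on (by norm_num : (0:ℝ) ≤ 2) hind hint_err hpt
  have hind_int : ∫ x in (0:ℝ)..2, good.indicator (fun _ => (1:ℝ)) x = (volume good).toReal := by
    rw [intervalIntegral.integral_of_le (by norm_num : (0:ℝ) ≤ 2)]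
    rw [MeasureTheory.setIntegral_indicator hmeas]
    rw [MeasureTheory.setIntegral_const]
    rw [Set.inter_eq_self_of_subset_right
      (Set.diff_subset.trans (Set.Ioc_subset_Ioc_right (by norm_num)))]
    rw [smul_eq_mul, mul_one]
    rfl
  have hsum : ∫ x in (0:ℝ)..2, (base x + δ * good.indicator (fun _ => (1:ℝ)) x)
      = 1/2 + δ * (volume good).toReal := by
    rw [intervalIntegral.integral_add (base_continuous.intervalIntegrable _ _)
      ((hig.const_mul δ).intervalIntegrable)]
    rw [intervalIntegral.integral_const_mul, base_integral, hind_int]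
  have hδval : δ = 1/(4096*(n:ℝ)^2) := by
    rw [hδ, hr, div_pow]
    congr 1
    · norm_num
    · ring
  rw [distortion_eq]
  have hkey : 1/2 + δ * (7/16) ≤ ∫ x in (0:ℝ)..2, err α x :=
    calc 1/2 + δ * (7/16) ≤ 1/2 + δ * (volume good).toReal := by nlinarith
      _ = ∫ x in (0:ℝ)..2, (base x + δ * good.indicator (fun _ => (1:ℝ)) x) := hsum.symm
      _ ≤ ∫ x in (0:ℝ)..2, err α x := hmono
  calc 1/4 + 1/(32768*(n:ℝ)^2) ≤ (1/2) * (1/2 + δ * (7/16)) := by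
        rw [hδval]
        ring_nf
        nlinarith [sq_nonneg (n:ℝ)]
    _ ≤ (1/2) * ∫ x in (0:ℝ)..2, err α x := by linarith [hkey]


lemma near_pt {k : ℕ} (hk : 1 ≤ k) {u : ℝ} (hu0 : 0 ≤ u) (hu1 : u ≤ 1) :
    ∃ i ∈ Finset.range k, (u - (2*(i:ℝ)+1)/(2*k))^2 ≤ 1/(4*(k:ℝ)^2) := by
  have hk0 : (0:ℝ) < k := by exact_mod_cast hk
  refine ⟨min ⌊k*u⌋₊ (k-1), Finset.mem_range.2 (by omega), ?_⟩
  set i := min ⌊k*u⌋₊ (k-1) with hi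
  have h1 : (i:ℝ) ≤ k*u := by
    have : (i:ℕ) ≤ ⌊k*u⌋₊ := min_le_left _ _
    calc (i:ℝ) ≤ (⌊k*u⌋₊ : ℝ) := by exact_mod_cast this
      _ ≤ k*u := Nat.floor_le (by positivity)
  have h2 : k*u ≤ (i:ℝ)+1 := by
    by_cases h : ⌊k*u⌋₊ ≤ k-1
    · have : i = ⌊k*u⌋₊ := min_eq_left h
      rw [this]
      exact le_of_lt (Nat.lt_floor_add_one _)
    · have hik : i = k-1 := min_eq_right (by omega)
      have : (i:ℝ) + 1 = k := by
        rw [hik]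
        have : (k:ℝ) - 1 + 1 = k := by ring
        push_cast [Nat.cast_sub hk]
        ring
      rw [this]
      nlinarith
  have heq : u - (2*(i:ℝ)+1)/(2*k) = (2*k*u - (2*(i:ℝ)+1))/(2*k) := by
    field_simp
  rw [heq, div_pow, div_le_div_iff₀ (by positivity) (by positivity)]
  have hA : (2*(k:ℝ)*u - (2*(i:ℝ)+1))^2 ≤ 1 := by nlinarith
  nlinarith [sq_nonneg ((2:ℝ)*k)]


noncomputable def apt (k i : ℕ) : ℝ := (2*(i:ℝ)+1)/(8*(k:ℝ))

noncomputable def conf (k : ℕ) : Finset (ℝ × ℝ) :=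
  (Finset.range k).image (fun i => (apt k i, Real.sqrt 3 * apt k i)) ∪
  (Finset.range k).image (fun i => (2 - apt k i, Real.sqrt 3 * apt k i))

lemma apt_bounds {k i : ℕ} (hk : 1 ≤ k) (hi : i < k) : 0 ≤ apt k i ∧ apt k i ≤ 1 := by
  have hk0 : (0:ℝ) < k := by exact_mod_cast hk
  have hi' : (i:ℝ) + 1 ≤ k := by exact_mod_cast hi
  constructor
  · unfold apt; positivity
  · unfold apt
    rw [div_le_one (by positivity)]
    nlinarith

lemma pt1_mem {k i : ℕ} (hk : 1 ≤ k) (hi : i < k) :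
    (apt k i, Real.sqrt 3 * apt k i) ∈ S1 := by
  obtain ⟨h0, h1⟩ := apt_bounds hk hi
  exact ⟨apt k i, h0, h1, rfl⟩

lemma pt2_mem {k i : ℕ} (hk : 1 ≤ k) (hi : i < k) :
    (2 - apt k i, Real.sqrt 3 * apt k i) ∈ S2 := by
  obtain ⟨h0, h1⟩ := apt_bounds hk hi
  refine ⟨2 - apt k i, by linarith, by linarith, ?_⟩
  have : -Real.sqrt 3 * (2 - apt k i - 2) = Real.sqrt 3 * apt k i := by ring
  rw [this]

lemma conf_sub {k : ℕ} (hk : 1 ≤ k) : ↑(conf k) ⊆ S1 ∪ S2 := by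
  intro p hp
  simp only [conf, Finset.coe_union, Set.mem_union, Finset.coe_image, Set.mem_image,
    Finset.mem_coe, Finset.mem_range] at hp
  rcases hp with ⟨i, hi, rfl⟩ | ⟨i, hi, rfl⟩
  · exact Or.inl (pt1_mem hk hi)
  · exact Or.inr (pt2_mem hk hi)

lemma conf_nonempty {k : ℕ} (hk : 1 ≤ k) : (conf k).Nonempty := by
  apply Finset.Nonempty.mono Finset.subset_union_left
  exact (Finset.nonempty_range_iff.2 (by omega)).image _

lemma conf_card {k : ℕ} : (conf k).card ≤ 2*k := by
  calc (conf k).card ≤ _ + _ := Finset.card_union_le _ _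
    _ ≤ k + k := by
        gcongr <;> exact le_trans (Finset.card_image_le) (by simp)
    _ = 2*k := by ring

lemma err_ub {k : ℕ} (hk : 1 ≤ k) {x : ℝ} (hx : x ∈ Set.Icc (0:ℝ) 2) :
    err (conf k) x ≤ base x + 1/(16*(k:ℝ)^2) := by
  have hk0 : (0:ℝ) < k := by exact_mod_cast hk
  rcases le_or_gt x 1 with hx1 | hx1
  · obtain ⟨i, hi, hsq⟩ := near_pt hk hx.1 hx1
    rw [Finset.mem_range] at hi
    have hmem : (apt k i, Real.sqrt 3 * apt k i) ∈ conf k :=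
      Finset.mem_union_left _ (Finset.mem_image_of_mem _ (Finset.mem_range.2 hi))
    have hval := (val_S1 (pt1_mem hk hi) x).1
    have h4a : 4 * apt k i = (2*(i:ℝ)+1)/(2*k) := by
      unfold apt; field_simp; ring
    rw [err_eq_inf' _ (conf_nonempty hk)]
    calc (conf k).inf' (conf_nonempty hk) (fun p => (x - p.1)^2 + p.2^2)
        ≤ (x - apt k i)^2 + (Real.sqrt 3 * apt k i)^2 := Finset.inf'_le _ hmem
      _ = (3/4)*x^2 + (x - 4*(apt k i))^2/4 := hval
      _ ≤ (3/4)*x^2 + 1/(16*(k:ℝ)^2) := by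
          rw [h4a]
          have : (x - (2*(i:ℝ)+1)/(2*k))^2/4 ≤ (1/(4*(k:ℝ)^2))/4 := by linarith
          have h2 : (1/(4*(k:ℝ)^2))/4 = 1/(16*(k:ℝ)^2) := by ring
          linarith [h2 ▸ this]
      _ ≤ base x + 1/(16*(k:ℝ)^2) := by
          unfold base
          rw [min_eq_left (by linarith)]
  · obtain ⟨i, hi, hsq⟩ := near_pt hk (by linarith [hx.2] : (0:ℝ) ≤ 2 - x) (by linarith)
    rw [Finset.mem_range] at hi
    have hmem : (2 - apt k i, Real.sqrt 3 * apt k i) ∈ conf k :=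
      Finset.mem_union_right _ (Finset.mem_image_of_mem _ (Finset.mem_range.2 hi))
    have hval := (val_S2 (pt2_mem hk hi) x).1
    have h4a : 4 * (2 - (2 - apt k i)) = (2*(i:ℝ)+1)/(2*k) := by
      unfold apt; field_simp; ring
    rw [err_eq_inf' _ (conf_nonempty hk)]
    calc (conf k).inf' (conf_nonempty hk) (fun p => (x - p.1)^2 + p.2^2)
        ≤ (x - (2 - apt k i))^2 + (Real.sqrt 3 * apt k i)^2 := Finset.inf'_le _ hmem
      _ = (3/4)*(2-x)^2 + ((2-x) - 4*(2 - (2 - apt k i)))^2/4 := hval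
      _ ≤ (3/4)*(2-x)^2 + 1/(16*(k:ℝ)^2) := by
          rw [h4a]
          have : ((2-x) - (2*(i:ℝ)+1)/(2*k))^2/4 ≤ (1/(4*(k:ℝ)^2))/4 := by linarith
          have h2 : (1/(4*(k:ℝ)^2))/4 = 1/(16*(k:ℝ)^2) := by ring
          linarith [h2 ▸ this]
      _ ≤ base x + 1/(16*(k:ℝ)^2) := by
          unfold base
          rw [min_eq_right (by linarith)]

lemma upper_bound {k : ℕ} (hk : 1 ≤ k) :
    distortion (conf k) ≤ 1/4 + 1/(16*(k:ℝ)^2) := by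
  have hk0 : (0:ℝ) < k := by exact_mod_cast hk
  rw [distortion_eq]
  have hint : ∫ x in (0:ℝ)..2, err (conf k) x ≤ ∫ x in (0:ℝ)..2, (base x + 1/(16*(k:ℝ)^2)) := by
    apply intervalIntegral.integral_mono_on (by norm_num)
      ((err_continuous _ (conf_nonempty hk)).intervalIntegrable _ _)
      ((base_continuous.add continuous_const).intervalIntegrable _ _)
    exact fun x hx => err_ub hk hx
  have hrhs : ∫ x in (0:ℝ)..2, (base x + 1/(16*(k:ℝ)^2)) = 1/2 + 2*(1/(16*(k:ℝ)^2)) := by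
    rw [intervalIntegral.integral_add (base_continuous.intervalIntegrable _ _)
      (intervalIntegrable_const), base_integral]
    simp
    ring
  rw [hrhs] at hint
  have : (0:ℝ) < (k:ℝ)^2 := by positivity
  nlinarith

lemma V_set_nonempty {n : ℕ} (hn : 1 ≤ n) :
    {v | ∃ α : Finset (ℝ × ℝ), ↑α ⊆ S1 ∪ S2 ∧ 1 ≤ α.card ∧ α.card ≤ n ∧ v = distortion α}.Nonempty := by
  refine ⟨distortion {((0:ℝ),(0:ℝ))}, {((0:ℝ),(0:ℝ))}, ?_, by simp, by simpa, rfl⟩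
  intro p hp
  simp at hp
  subst hp
  exact Or.inl ⟨0, le_refl _, by norm_num, by norm_num⟩

lemma V_set_bddBelow (n : ℕ) :
    BddBelow {v | ∃ α : Finset (ℝ × ℝ), ↑α ⊆ S1 ∪ S2 ∧ 1 ≤ α.card ∧ α.card ≤ n ∧ v = distortion α} := by
  refine ⟨1/4, ?_⟩
  rintro v ⟨α, hsub, hc1, _, rfl⟩
  have := lower_bound (n := α.card) hc1 hsub (le_refl _) (Finset.card_pos.1 hc1)
  have hpos : 0 < 1/(32768 * (α.card:ℝ)^2) := by
    have : (0:ℝ) < α.card := by exact_mod_cast hc1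
    positivity
  linarith

lemma V_ge {n : ℕ} (hn : 1 ≤ n) : 1/4 + 1/(32768 * (n:ℝ)^2) ≤ V n := by
  apply le_csInf (V_set_nonempty hn)
  rintro v ⟨α, hsub, hc1, hc2, rfl⟩
  have hαne : α.Nonempty := Finset.card_pos.1 hc1
  exact lower_bound hn hsub hc2 hαne

lemma V_le {n : ℕ} (hn : 2 ≤ n) : V n ≤ 1/4 + 1/(n:ℝ)^2 := by
  set k := n/2 with hkdef
  have hk : 1 ≤ k := by omega
  have hcard : (conf k).card ≤ n := le_trans conf_card (by omega)
  have hmem : distortion (conf k) ∈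
      {v | ∃ α : Finset (ℝ × ℝ), ↑α ⊆ S1 ∪ S2 ∧ 1 ≤ α.card ∧ α.card ≤ n ∧ v = distortion α} :=
    ⟨conf k, conf_sub hk, Finset.card_pos.2 (conf_nonempty hk), hcard, rfl⟩
  have h1 : V n ≤ distortion (conf k) := csInf_le (V_set_bddBelow n) hmem
  have h2 : distortion (conf k) ≤ 1/4 + 1/(16*(k:ℝ)^2) := upper_bound hk
  have hkn : ((n:ℝ) - 1)/2 ≤ (k:ℝ) := by
    have : n ≤ 2*k+1 := by omega
    have : (n:ℝ) ≤ 2*(k:ℝ)+1 := by exact_mod_cast this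
    linarith
  have hn' : (2:ℝ) ≤ n := by exact_mod_cast hn
  have h3 : 1/(16*(k:ℝ)^2) ≤ 1/(n:ℝ)^2 := by
    apply div_le_div_of_nonneg_left (by norm_num) (by positivity)
    nlinarith
  linarith

open Filter Topology

/-- The constrained quantization dimension exists and equals 1: with V_∞ = lim Vₙ = 1/4,
one has 2 log n / (−log(Vₙ − V_∞)) → 1. -/
theorem stmt18 :
    Filter.Tendsto V Filter.atTop (nhds (1/4 : ℝ)) ∧
    Filter.Tendsto (fun n : ℕ => 2 * Real.log n / (-Real.log (V n - 1/4)))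
      Filter.atTop (nhds (1 : ℝ)) := by
  have hninv : Tendsto (fun n : ℕ => 1/(n:ℝ)^2) atTop (𝓝 0) := by
    apply Filter.Tendsto.div_atTop tendsto_const_nhds
    exact (tendsto_pow_atTop (by norm_num)).comp tendsto_natCast_atTop_atTop
  constructor
  · have hub : Tendsto (fun n : ℕ => 1/4 + 1/(n:ℝ)^2) atTop (𝓝 (1/4 : ℝ)) := by
      simpa using tendsto_const_nhds.add hninv
    apply tendsto_of_tendsto_of_tendsto_of_le_of_le'
      (tendsto_const_nhds : Tendsto (fun _ : ℕ => (1/4:ℝ)) atTop _) hub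
    · filter_upwards [Filter.eventually_ge_atTop 1] with n hn
      have h := V_ge hn
      have hn0 : (0:ℝ) < n := by exact_mod_cast hn
      have hpos : 0 < 1/(32768*(n:ℝ)^2) := by positivity
      linarith
    · filter_upwards [Filter.eventually_ge_atTop 2] with n hn
      exact V_le hn
  · set K : ℝ := Real.log 32768 with hK
    have hKpos : 0 < K := Real.log_pos (by norm_num)
    have hlow : Tendsto (fun n : ℕ => 2*Real.log n/(2*Real.log n + K)) atTop (𝓝 (1:ℝ)) := by
      have hden : Tendsto (fun n : ℕ => 2*Real.log n + K) atTop atTop := by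
        apply Filter.tendsto_atTop_add_const_right
        exact (Real.tendsto_log_atTop.comp tendsto_natCast_atTop_atTop).const_mul_atTop
          (by norm_num)
      have hfrac : Tendsto (fun n : ℕ => K/(2*Real.log n + K)) atTop (𝓝 0) :=
        Filter.Tendsto.div_atTop tendsto_const_nhds hden
      have heq : (fun n : ℕ => 2*Real.log n/(2*Real.log n + K))
          = fun n : ℕ => 1 - K/(2*Real.log n + K) := by
        funext n
        have hL : 0 ≤ Real.log n := Real.log_natCast_nonneg n
        have hD : (0:ℝ) < 2*Real.log n + K := by linarith
        field_simp
        ring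
      rw [heq]
      simpa using tendsto_const_nhds.sub hfrac
    apply tendsto_of_tendsto_of_tendsto_of_le_of_le' hlow
      (tendsto_const_nhds : Tendsto (fun _ : ℕ => (1:ℝ)) atTop _)
    · filter_upwards [Filter.eventually_ge_atTop 2] with n hn
      have hn0 : (0:ℝ) < n := by exact_mod_cast (by omega : 0 < n)
      have hn2 : (2:ℝ) ≤ n := by exact_mod_cast hn
      have he1 : 1/(32768*(n:ℝ)^2) ≤ V n - 1/4 := by linarith [V_ge (by omega : 1 ≤ n)]
      have he2 : V n - 1/4 ≤ 1/(n:ℝ)^2 := by linarith [V_le hn]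
      have hepos : 0 < V n - 1/4 := lt_of_lt_of_le (by positivity) he1
      have hL : 0 < Real.log n := Real.log_pos (by exact_mod_cast (by omega : 1 < n))
      have hlog_up : Real.log (V n - 1/4) ≤ -(2*Real.log n) := by
        calc Real.log (V n - 1/4) ≤ Real.log (1/(n:ℝ)^2) :=
              (Real.log_le_log_iff hepos (by positivity)).2 he2
          _ = -(2*Real.log n) := by
              rw [one_div, Real.log_inv, Real.log_pow]
              norm_num
      have hlog_dn : -(2*Real.log n) - K ≤ Real.log (V n - 1/4) := by
        calc -(2*Real.log n) - K = Real.log (1/(32768*(n:ℝ)^2)) := by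
              rw [one_div, Real.log_inv, Real.log_mul (by norm_num) (by positivity),
                Real.log_pow, hK]
              push_cast
              ring
          _ ≤ Real.log (V n - 1/4) :=
              (Real.log_le_log_iff (by positivity) hepos).2 he1
      have hden1 : 2*Real.log n ≤ -Real.log (V n - 1/4) := by linarith
      have hden2 : -Real.log (V n - 1/4) ≤ 2*Real.log n + K := by linarith
      calc 2*Real.log n/(2*Real.log n + K) ≤ 2*Real.log n/(-Real.log (V n - 1/4)) := by
            apply div_le_div_of_nonneg_left (by linarith) (by linarith) hden2
        _ = _ := rfl
    · filter_upwards [Filter.eventually_ge_atTop 2] with n hn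
      have hn0 : (0:ℝ) < n := by exact_mod_cast (by omega : 0 < n)
      have hn2 : (2:ℝ) ≤ n := by exact_mod_cast hn
      have he1 : 1/(32768*(n:ℝ)^2) ≤ V n - 1/4 := by linarith [V_ge (by omega : 1 ≤ n)]
      have he2 : V n - 1/4 ≤ 1/(n:ℝ)^2 := by linarith [V_le hn]
      have hepos : 0 < V n - 1/4 := lt_of_lt_of_le (by positivity) he1
      have hL : 0 < Real.log n := Real.log_pos (by exact_mod_cast (by omega : 1 < n))
      have hlog_up : Real.log (V n - 1/4) ≤ -(2*Real.log n) := by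
        calc Real.log (V n - 1/4) ≤ Real.log (1/(n:ℝ)^2) :=
              (Real.log_le_log_iff hepos (by positivity)).2 he2
          _ = -(2*Real.log n) := by
              rw [one_div, Real.log_inv, Real.log_pow]
              norm_num
      have hden1 : 2*Real.log n ≤ -Real.log (V n - 1/4) := by linarith
      calc 2*Real.log n/(-Real.log (V n - 1/4)) ≤ 2*Real.log n/(2*Real.log n) := by
            apply div_le_div_of_nonneg_left (by linarith) (by linarith) hden1
        _ = 1 := by
            rw [div_self (by linarith)]
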